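/- Let b be a positive rational and m ≥ 2 such that b^(1/m) is a reduced irrational. Then the minimal polynomial of b^(1/m) over ℚ is X^m − b; in particular, [ℚ(b^(1/m)) : ℚ] = m. -/

import Mathlib

open Polynomial IntermediateField

def IsReducedIrrational (b : ℚ) (m : ℕ) : Prop :=
  0 < b ∧ 2 ≤ m ∧ Irrational ((b : ℝ) ^ ((1 : ℝ) / m)) ∧
    ∀ e d : ℚ, 0 < e → 0 < d → ∀ n : ℕ, n < m →
      (b : ℝ) ^ ((1 : ℝ) / m) ≠ (e : ℝ) * (d : ℝ) ^ ((1 : ℝ) / n)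

theorem minpoly_of_reduced_irrational (b : ℚ) (m : ℕ)
    (hred : IsReducedIrrational b m) :
    minpoly ℚ ((b : ℝ) ^ ((1 : ℝ) / m)) = X ^ m - C b ∧
    Module.finrank ℚ ℚ⟮(b : ℝ) ^ ((1 : ℝ) / m)⟯ = m := by
  obtain ⟨hb, hm, hirr, hmin⟩ := hred
  set α : ℝ := (b : ℝ) ^ ((1 : ℝ) / m) with hα
  have hm0 : (m : ℝ) ≠ 0 := by positivity
  have hbR : (0 : ℝ) < (b : ℝ) := by exact_mod_cast hb
  have hαpos : 0 < α := Real.rpow_pos_of_pos hbR _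
  -- α ^ m = b
  have hαm : α ^ m = (b : ℝ) := by
    rw [hα, ← Real.rpow_natCast (_ ^ _) m, ← Real.rpow_mul hbR.le]
    field_simp
    simp
  have hp_monic : (X ^ m - C b : ℚ[X]).Monic :=
    monic_X_pow_sub_C b (by omega)
  have haeval : aeval α (X ^ m - C b : ℚ[X]) = 0 := by
    simp [hαm]
  have hint : IsIntegral ℚ α := ⟨X ^ m - C b, hp_monic, haeval⟩
  have hdvd : minpoly ℚ α ∣ X ^ m - C b := minpoly.dvd ℚ α haeval
  set q := minpoly ℚ α with hq
  have hq_monic : q.Monic := minpoly.monic hint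
  set n := q.natDegree with hn
  have hn_le : n ≤ m := by
    have := Polynomial.natDegree_le_of_dvd hdvd hp_monic.ne_zero
    simpa [natDegree_X_pow_sub_C] using this
  have hn_pos : 0 < n := minpoly.natDegree_pos hint
  -- key: α ^ n is rational
  have hrat : α ^ n = |q.coeff 0| := by
    set f := q.map (algebraMap ℚ ℂ) with hf
    have hf_monic : f.Monic := hq_monic.map _
    have hf_splits : f.Splits := IsAlgClosed.splits f
    have hcard : f.roots.card = n := by
      rw [(splits_iff_card_roots).mp hf_splits, hf, hq_monic.natDegree_map]
    have hroots : ∀ z ∈ f.roots, ‖z‖ = α := by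
      intro z hz
      have hz0 : aeval z q = 0 := by
        have := (mem_roots (hf_monic.ne_zero)).mp hz
        rwa [hf, IsRoot, eval_map, ← aeval_def] at this
      have hzp : aeval z (X ^ m - C b : ℚ[X]) = 0 := by
        obtain ⟨u, hu⟩ := hdvd
        rw [hu, map_mul, hz0, zero_mul]
      have hzm : z ^ m = (b : ℂ) := by
        simpa [sub_eq_zero] using hzp
      have habs : ‖z‖ ^ m = (b : ℝ) := by
        rw [← norm_pow, hzm,
          show ((b : ℚ) : ℂ) = (((b : ℚ) : ℝ) : ℂ) from by norm_cast,
          Complex.norm_real, Real.norm_eq_abs, abs_of_pos hbR]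
      have : ‖z‖ ^ m = α ^ m := by rw [habs, hαm]
      exact (pow_left_inj₀ (norm_nonneg z) hαpos.le (by omega)).mp this
    have hprod : f.coeff 0 = (-1) ^ n * f.roots.prod := by
      have := hf_splits.coeff_zero_eq_prod_roots_of_monic hf_monic
      rwa [hf, hq_monic.natDegree_map, ← hn] at this
    have habs : ‖f.coeff 0‖ = α ^ n := by
      rw [hprod, norm_mul, norm_pow, norm_neg, norm_one, one_pow, one_mul]
      have : (f.roots.map norm) = Multiset.replicate n α := by
        apply Multiset.eq_replicate.mpr
        constructor
        · rw [Multiset.card_map, hcard]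
        · intro x hx
          obtain ⟨z, hz, rfl⟩ := Multiset.mem_map.mp hx
          exact hroots z hz
      rw [show ‖f.roots.prod‖ = (f.roots.map norm).prod from map_multiset_prod (normHom (α := ℂ)) f.roots, this, Multiset.prod_replicate]
    have hc0 : f.coeff 0 = ((q.coeff 0 : ℚ) : ℂ) := by
      simp [hf, coeff_map]
    rw [hc0] at habs
    rw [← habs, show ((q.coeff 0 : ℚ) : ℂ) = (((q.coeff 0 : ℚ) : ℝ) : ℂ) from by norm_cast,
      Complex.norm_real, Real.norm_eq_abs, Rat.cast_abs]
  -- show n = m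
  have hnm : n = m := by
    by_contra hne
    have hnlt : n < m := lt_of_le_of_ne hn_le hne
    set r : ℚ := |q.coeff 0| with hr
    have hr_pos : 0 < r := by
      by_contra h
      push_neg at h
      have : α ^ n > 0 := pow_pos hαpos n
      rw [hrat] at this
      exact absurd (by exact_mod_cast this) (not_lt.mpr h)
    set d := Nat.gcd n m with hd
    have hd_pos : 0 < d := Nat.gcd_pos_of_pos_left m hn_pos
    have hd_lt : d < m := lt_of_le_of_lt (Nat.le_of_dvd hn_pos (Nat.gcd_dvd_left n m)) hnlt
    -- Bezout
    have hbez : (d : ℤ) = n * Nat.gcdA n m + m * Nat.gcdB n m := Nat.gcd_eq_gcd_ab n m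
    set c : ℚ := r ^ (Nat.gcdA n m) * b ^ (Nat.gcdB n m) with hc
    have hc_pos : 0 < c := mul_pos (zpow_pos hr_pos _) (zpow_pos hb _)
    have hαd : α ^ (d : ℤ) = (c : ℝ) := by
      rw [hbez, zpow_add₀ hαpos.ne', zpow_mul, zpow_mul]
      have h1 : α ^ (n : ℤ) = (r : ℝ) := by
        rw [zpow_natCast, hrat]
      have h2 : α ^ (m : ℤ) = (b : ℝ) := by rw [zpow_natCast, hαm]
      rw [h1, h2, hc]
      push_cast [Rat.cast_zpow]
      ring
    have hαeq : α = (c : ℝ) ^ ((1 : ℝ) / d) := by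
      have hcR : (0:ℝ) < (c:ℝ) := by exact_mod_cast hc_pos
      have : α ^ (d : ℕ) = (c : ℝ) := by
        rw [← zpow_natCast]; exact hαd
      rw [← this, ← Real.rpow_natCast α d, ← Real.rpow_mul hαpos.le]
      rw [mul_one_div, div_self (by positivity), Real.rpow_one]
    exact hmin 1 c one_pos hc_pos d hd_lt (by rw [hαeq, Rat.cast_one, one_mul])
  -- conclude q = X^m - C b
  have hqp : q = X ^ m - C b := by
    obtain ⟨u, hu⟩ := hdvd
    have hu0 : u ≠ 0 := by
      intro h; rw [h, mul_zero] at hu; exact hp_monic.ne_zero hu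
    have hdeg : u.natDegree = 0 := by
      have := congrArg natDegree hu
      rw [natDegree_X_pow_sub_C, natDegree_mul hq_monic.ne_zero hu0, ← hn, hnm] at this
      omega
    have hulc : u.coeff 0 = 1 := by
      have h2 := hp_monic
      rw [hu] at h2
      have h3 := h2.leadingCoeff
      rwa [leadingCoeff_mul, hq_monic.leadingCoeff, one_mul, Polynomial.leadingCoeff, hdeg]
        at h3
    have : u = 1 := by
      rw [Polynomial.eq_C_of_natDegree_eq_zero hdeg, hulc, map_one]
    rw [hu, this, mul_one]
  constructor
  · exact hqp
  · rw [IntermediateField.adjoin.finrank hint, ← hn, hnm]
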